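/- Let N be a 3-dimensional nonunital commutative associative ℂ-algebra such that every product of three elements of N is zero, the subspace N² = span_ℂ{x·y : x, y ∈ N} is 1-dimensional, and the annihilator {x ∈ N : x·y = 0 for all y ∈ N} is 2-dimensional (i.e. the induced quadratic form on N/N² with values in N² has rank 1). Then N is isomorphic to the model algebra III_{2,3}, i.e. the 3-dimensional nonunital ℂ-algebra with basis u, v, w and products v·v = w and all other products of basis vectors zero. -/

import Mathlib

/-- The multiplication of the model algebra `III_{2,3} = 𝔪_{x,y}/(xy, x², y³)` with
basis `u, v, w`: `v·v = w`, all other products of basis vectors zero. -/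
def mulIII23 (p q : Fin 3 → ℂ) : Fin 3 → ℂ :=
  ![0, 0, p 1 * q 1]

/-- The annihilator `{x ∈ N : x·y = 0 for all y ∈ N}` of a nonunital commutative
`ℂ`-algebra, as a `ℂ`-submodule. -/
def annihilatorSubmodule (N : Type*) [NonUnitalCommRing N] [Module ℂ N]
    [IsScalarTower ℂ N N] : Submodule ℂ N where
  carrier := {x : N | ∀ y : N, x * y = 0}
  zero_mem' := by intro y; simp
  add_mem' := by
    intro a b ha hb y
    rw [add_mul, ha y, hb y, add_zero]
  smul_mem' := by
    intro c a ha y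
    rw [smul_mul_assoc, ha y, smul_zero]

/-- A 3-dimensional nonunital commutative associative `ℂ`-algebra with vanishing triple
products, 1-dimensional square `N²`, and 2-dimensional annihilator (induced quadratic
form of rank 1) is isomorphic to the model algebra `III_{2,3}`. -/
theorem iso_III23_of_rank_one
    (N : Type*) [NonUnitalCommRing N] [Module ℂ N]
    [SMulCommClass ℂ N N] [IsScalarTower ℂ N N] [Module.Finite ℂ N]
    (hdim : Module.finrank ℂ N = 3)
    (htriple : ∀ x y z : N, x * y * z = 0)
    (hsq : Module.finrank ℂ
      ↥(Submodule.span ℂ {z : N | ∃ x y : N, z = x * y}) = 1)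
    (hann : Module.finrank ℂ ↥(annihilatorSubmodule N) = 2) :
    ∃ e : N ≃ₗ[ℂ] (Fin 3 → ℂ),
      ∀ x y : N, e (x * y) = mulIII23 (e x) (e y) := by
    -- Step 1: find v with v*v ≠ 0
  have hv : ∃ v : N, v * v ≠ 0 := by
    by_contra h
    push_neg at h
    have hxy : ∀ x y : N, x * y = 0 := by
      intro x y
      have h2 : (2 : ℂ) • (x * y) = 0 := by
        have hexp : (x + y) * (x + y) = x * x + (x * y + (y * x + y * y)) := by
          rw [add_mul, mul_add, mul_add, add_assoc]
        rw [h (x + y), h x, h y, zero_add, add_zero, mul_comm y x] at hexp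
        rw [two_smul]; exact hexp.symm
      simpa using (smul_eq_zero.mp h2).resolve_left (by norm_num)
    have : Submodule.span ℂ {z : N | ∃ x y : N, z = x * y} = ⊥ := by
      rw [Submodule.span_eq_bot]
      rintro z ⟨x, y, rfl⟩
      exact hxy x y
    rw [this, finrank_bot] at hsq
    exact one_ne_zero hsq.symm
  obtain ⟨v, hv⟩ := hv
  set w : N := v * v with hwdef
  have hwann : ∀ z : N, w * z = 0 := fun z => htriple v v z
  have hwmem : w ∈ annihilatorSubmodule N := hwann
  -- Step 2: find u in ann, not in span {w}
  have hlt : Submodule.span ℂ {w} < annihilatorSubmodule N := by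
    have hle : Submodule.span ℂ {w} ≤ annihilatorSubmodule N := by
      rw [Submodule.span_le, Set.singleton_subset_iff]; exact hwmem
    refine lt_of_le_of_ne hle ?_
    intro heq
    have h1 : Module.finrank ℂ ↥(Submodule.span ℂ {w}) = 1 :=
      finrank_span_singleton hv
    rw [heq, hann] at h1
    norm_num at h1
  obtain ⟨u, humem, hunot⟩ := SetLike.exists_of_lt hlt
  have hu : ∀ z : N, u * z = 0 := humem
  have hvu : v * u = 0 := by rw [mul_comm]; exact hu v
  have hvw : v * w = 0 := by rw [mul_comm]; exact hwann v
  -- Step 3: linear independence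
  have hli : LinearIndependent ℂ ![u, v, w] := by
    rw [Fintype.linearIndependent_iff]
    intro g hg
    rw [Fin.sum_univ_three] at hg
    simp only [Matrix.cons_val_zero, Matrix.cons_val_one, Matrix.head_cons,
      Matrix.cons_val_two, Matrix.tail_cons] at hg
    have h1 : g 1 = 0 := by
      have hmul := congrArg (· * v) hg
      simp only [add_mul, smul_mul_assoc, zero_mul, hu, hwann, smul_zero,
        zero_add, add_zero] at hmul
      exact (smul_eq_zero.mp hmul).resolve_right hv
    have h0 : g 0 = 0 := by
      by_contra hg0
      apply hunot
      rw [Submodule.mem_span_singleton]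
      rw [h1, zero_smul, add_zero] at hg
      have h2 : g 0 • u = (-g 2) • w := by
        rw [neg_smul]; exact eq_neg_of_add_eq_zero_left hg
      refine ⟨(g 0)⁻¹ * (-g 2), ?_⟩
      rw [mul_smul, ← h2, smul_smul, inv_mul_cancel₀ hg0, one_smul]
    have h2 : g 2 = 0 := by
      rw [h0, h1, zero_smul, zero_smul, zero_add, zero_add] at hg
      exact (smul_eq_zero.mp hg).resolve_right hv
    intro i
    fin_cases i <;> assumption
  -- Step 4: basis
  have hcard : Fintype.card (Fin 3) = Module.finrank ℂ N := by simp [hdim]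
  let b : Module.Basis (Fin 3) ℂ N := basisOfLinearIndependentOfCardEqFinrank hli hcard
  have hb : ⇑b = ![u, v, w] := coe_basisOfLinearIndependentOfCardEqFinrank hli hcard
  have hb0 : b 0 = u := by rw [hb]; rfl
  have hb1 : b 1 = v := by rw [hb]; rfl
  have hb2 : b 2 = w := by rw [hb]; rfl
  let e := b.equivFun
  have key : ∀ x y : N, x * y = (e x 1 * e y 1) • w := by
    intro x y
    conv_lhs => rw [← b.sum_equivFun x, ← b.sum_equivFun y]
    rw [Fin.sum_univ_three, Fin.sum_univ_three, hb0, hb1, hb2]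
    simp only [add_mul, mul_add, smul_mul_assoc, mul_smul_comm, hu, hwann, hvu, hvw,
      smul_zero, zero_add, add_zero, smul_smul]
    rw [mul_comm (b.equivFun y 1) (b.equivFun x 1)]
  refine ⟨e, fun x y => ?_⟩
  rw [key x y, map_smul]
  have hew : e w = fun j => if (2 : Fin 3) = j then 1 else 0 := by
    funext j
    rw [← hb2]
    exact b.equivFun_self 2 j
  funext j
  fin_cases j <;> simp [hew, mulIII23, e]
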